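/- Let X = [0,1] with the Euclidean metric and let F be the set-valued map defined by F(x) = {x} for 0 ≤ x < 1/2, F(1/2) = [0,1], F(x) = {0, x, 1} for 1/2 < x < 1, and F(1) = [0,1]. Then the shift σ is sensitive on lim←F. -/

import Mathlib

open Set Metric

section Defs

variable {X : Type*} [MetricSpace X]

/-- A set-valued map: `F` assigns to each point a nonempty closed subset and
is upper semi-continuous. -/
def IsSetValuedMap (F : X → Set X) : Prop :=
  (∀ x, (F x).Nonempty) ∧ (∀ x, IsClosed (F x)) ∧
    ∀ x, ∀ V : Set X, IsOpen V → F x ⊆ V →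
      ∃ U : Set X, IsOpen U ∧ x ∈ U ∧ ∀ t ∈ U, F t ⊆ V

/-- Lower semi-continuity of a set-valued map. -/
def LowerSemiCont (F : X → Set X) : Prop :=
  ∀ x, ∀ y ∈ F x, ∀ V : Set X, IsOpen V → y ∈ V →
    ∃ U : Set X, IsOpen U ∧ x ∈ U ∧ ∀ t ∈ U, (F t ∩ V).Nonempty

/-- An orbit of the set-valued map `F`: `o (i+1) ∈ F (o i)` for all `i`. -/
def IsOrbit (F : X → Set X) (o : ℕ → X) : Prop := ∀ i, o (i + 1) ∈ F (o i)

/-- `P(F)`: the set of points having at least one periodic orbit. -/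
def periodicPts (F : X → Set X) : Set X :=
  {x | ∃ o : ℕ → X, o 0 = x ∧ IsOrbit F o ∧ ∃ m, 1 ≤ m ∧ ∀ i, o (i + m) = o i}

/-- The inverse set-valued map `F⁻¹(x) = {y : x ∈ F y}`. -/
def Finv (F : X → Set X) : X → Set X := fun x => {y | x ∈ F y}

/-- The iterates `F^n`, with `F^0 x = {x}` and `F^{n+1} x = ⋃_{y ∈ F^n x} F y`. -/
def svIter (F : X → Set X) : ℕ → X → Set X
  | 0, x => {x}
  | n + 1, x => ⋃ y ∈ svIter F n x, F y

/-- The inverse limit `lim← F = {(x_0,x_1,…) : x_i ∈ F (x_{i+1})}`. -/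
def invLimit (F : X → Set X) : Set (ℕ → X) := {x | ∀ i, x i ∈ F (x (i + 1))}

/-- The shift map `σ(x_0, x_1, …) = (x_1, x_2, …)`. -/
def shift (x : ℕ → X) : ℕ → X := fun i => x (i + 1)

/-- The metric `ρ(x,y) = Σ_i d(x_i,y_i)/2^i` on sequences. -/
noncomputable def rho (x y : ℕ → X) : ℝ := ∑' i, dist (x i) (y i) / 2 ^ i

/-- Topological transitivity for a set-valued map. -/
def SVTransitive (F : X → Set X) : Prop :=
  ∀ U V : Set X, IsOpen U → U.Nonempty → IsOpen V → V.Nonempty →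
    ∃ n, 1 ≤ n ∧ ∃ o : ℕ → X, IsOrbit F o ∧ o 0 ∈ U ∧ o n ∈ V

/-- Strong sensitivity with a given constant `δ`. -/
def StronglySensitiveWith (F : X → Set X) (δ : ℝ) : Prop :=
  0 < δ ∧ ∀ x : X, ∀ ε > 0, ∃ y : X, dist x y < ε ∧
    ∃ o : ℕ → X, o 0 = y ∧ IsOrbit F o ∧ ∃ n, 1 ≤ n ∧ δ < infDist (o n) (svIter F n x)

/-- Strong sensitivity: some `δ > 0` is a strongly sensitive constant. -/
def StronglySensitive (F : X → Set X) : Prop := ∃ δ, StronglySensitiveWith F δ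

/-- Sensitivity for a set-valued map. -/
def SVSensitive (F : X → Set X) : Prop :=
  ∃ δ > 0, ∀ ε > 0, ∀ o : ℕ → X, IsOrbit F o →
    ∃ o' : ℕ → X, IsOrbit F o' ∧ dist (o 0) (o' 0) < ε ∧ ∃ n, 1 ≤ n ∧ δ < dist (o n) (o' n)

/-- Topological transitivity of the shift `σ` on `lim← F` (relatively open sets). -/
def ShiftTransitive (F : X → Set X) : Prop :=
  ∀ U V : Set (ℕ → X), IsOpen U → IsOpen V →
    (U ∩ invLimit F).Nonempty → (V ∩ invLimit F).Nonempty →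
    ∃ n, 1 ≤ n ∧ ∃ x ∈ U ∩ invLimit F, shift^[n] x ∈ V ∩ invLimit F

/-- Sensitivity of the shift `σ` on `lim← F` with respect to the metric `ρ`. -/
def ShiftSensitive (F : X → Set X) : Prop :=
  ∃ δ > 0, ∀ x ∈ invLimit F, ∀ ε > 0, ∃ y ∈ invLimit F,
    rho x y < ε ∧ ∃ n, 1 ≤ n ∧ δ < rho (shift^[n] x) (shift^[n] y)

/-- The set of σ-periodic points of `lim← F`. -/
def shiftPerPts (F : X → Set X) : Set (ℕ → X) :=
  {z | z ∈ invLimit F ∧ ∃ n, 1 ≤ n ∧ shift^[n] z = z}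

end Defs

/-- The set-valued map on `[0,1]` with `F x = {x}` for `x < 1/2`, `F (1/2) = [0,1]`,
`F x = {0, x, 1}` for `1/2 < x < 1`, and `F 1 = [0,1]`. -/
noncomputable def exF : unitInterval → Set unitInterval := fun x =>
  if (x : ℝ) < 1 / 2 then {x}
  else if (x : ℝ) = 1 / 2 then Set.univ
  else if (x : ℝ) < 1 then {y | (y : ℝ) = 0 ∨ y = x ∨ (y : ℝ) = 1}
  else Set.univ

namespace Stmt16Aux

noncomputable def half : unitInterval := ⟨1/2, by norm_num⟩

lemma exF_eq_univ {c : unitInterval} (h : (c : ℝ) = 1/2 ∨ (c : ℝ) = 1) :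
    exF c = Set.univ := by
  rcases h with h | h
  · simp [exF, h]
  · simp only [exF, h]
    norm_num

/-- The perturbed sequence: agrees with `x` up to index `N`, then constant `c`. -/
noncomputable def seqMod (x : ℕ → unitInterval) (N : ℕ) (c : unitInterval) :
    ℕ → unitInterval := fun i => if i ≤ N then x i else c

lemma seqMod_mem {x : ℕ → unitInterval} (hx : x ∈ invLimit exF) (N : ℕ)
    {c : unitInterval} (hc : exF c = Set.univ) : seqMod x N c ∈ invLimit exF := by
  intro i
  by_cases h : i + 1 ≤ N
  · have h' : i ≤ N := by omega
    simpa [seqMod, h, h'] using hx i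
  · simp [seqMod, h, hc]

lemma dist_le_one (a b : unitInterval) : dist a b ≤ 1 := by
  rw [Subtype.dist_eq, Real.dist_eq, abs_sub_le_iff]
  constructor
  · have := a.2.2; have := b.2.1; linarith
  · have := b.2.2; have := a.2.1; linarith

lemma summable_rho (x y : ℕ → unitInterval) :
    Summable (fun i => dist (x i) (y i) / 2 ^ i) := by
  have hg : Summable (fun i : ℕ => (1/2 : ℝ) ^ i) :=
    summable_geometric_of_lt_one (by norm_num) (by norm_num)
  refine Summable.of_nonneg_of_le (fun i => by positivity) (fun i => ?_) hg
  have h1 : ((1:ℝ)/2) ^ i = 1 / 2 ^ i := by rw [div_pow, one_pow]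
  rw [h1]
  gcongr
  exact dist_le_one _ _

lemma dist_le_rho (x y : ℕ → unitInterval) : dist (x 0) (y 0) ≤ rho x y := by
  have h := Summable.le_tsum (summable_rho x y) 0 (fun i _ => by positivity)
  simpa [rho] using h

lemma rho_seqMod_le (x : ℕ → unitInterval) (N : ℕ) (c : unitInterval) :
    rho x (seqMod x N c) ≤ (1/2 : ℝ) ^ N := by
  set f := fun i => dist (x i) (seqMod x N c i) / 2 ^ i with hf
  have hs : Summable f := summable_rho x (seqMod x N c)
  have hsplit := (Summable.sum_add_tsum_nat_add (f := f) (N + 1) hs).symm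
  have h0 : ∀ i ∈ Finset.range (N + 1), f i = 0 := by
    intro i hi
    have : i ≤ N := by simpa [Nat.lt_succ_iff] using Finset.mem_range.mp hi
    simp [hf, seqMod, this]
  have hsum0 : ∑ i ∈ Finset.range (N + 1), f i = 0 := Finset.sum_eq_zero h0
  have hg : Summable (fun i : ℕ => (1/2 : ℝ) ^ (N + 1) * (1/2) ^ i) :=
    (summable_geometric_of_lt_one (by norm_num) (by norm_num)).mul_left _
  have htail : ∑' i, f (i + (N + 1)) ≤ ∑' i, (1/2 : ℝ) ^ (N + 1) * (1/2) ^ i := by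
    refine Summable.tsum_le_tsum (fun i => ?_) ((summable_nat_add_iff (N+1)).mpr hs) hg
    have h1 : (1/2 : ℝ) ^ (N + 1) * (1/2) ^ i = 1 / 2 ^ (i + (N + 1)) := by
      rw [← pow_add, div_pow, one_pow, add_comm]
    rw [h1]
    show dist (x (i + (N+1))) (seqMod x N c (i + (N+1))) / 2 ^ (i + (N+1)) ≤ _
    gcongr
    exact dist_le_one _ _
  have hgeom : ∑' i, (1/2 : ℝ) ^ (N + 1) * (1/2) ^ i = (1/2 : ℝ) ^ N := by
    rw [tsum_mul_left, tsum_geometric_of_lt_one (by norm_num) (by norm_num)]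
    rw [pow_succ]
    ring
  calc rho x (seqMod x N c) = ∑ i ∈ Finset.range (N + 1), f i + ∑' i, f (i + (N + 1)) :=
        hsplit
    _ = ∑' i, f (i + (N + 1)) := by rw [hsum0, zero_add]
    _ ≤ (1/2 : ℝ) ^ N := htail.trans (le_of_eq hgeom)

lemma shift_iterate (x : ℕ → unitInterval) (n i : ℕ) : shift^[n] x i = x (i + n) := by
  induction n generalizing x with
  | zero => rfl
  | succ n ih =>
    rw [Function.iterate_succ_apply, ih]
    simp [shift, Nat.add_assoc]

lemma quarter_sep (a : unitInterval) :
    (1/4 : ℝ) ≤ dist a half ∨ (1/4 : ℝ) ≤ dist a (1 : unitInterval) := by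
  by_contra h
  push_neg at h
  obtain ⟨h1, h2⟩ := h
  rw [Subtype.dist_eq, Real.dist_eq, abs_sub_lt_iff] at h1 h2
  have e1 : ((half : unitInterval) : ℝ) = 1/2 := rfl
  have e2 : (((1 : unitInterval)) : ℝ) = 1 := rfl
  rw [e1] at h1; rw [e2] at h2
  linarith [h1.1, h1.2, h2.1, h2.2]

end Stmt16Aux

/-- the shift `σ` is sensitive on `lim← exF`. -/
theorem stmt16 : ShiftSensitive exF := by
  open Stmt16Aux in
  refine ⟨1/8, by norm_num, ?_⟩
  intro x hx ε hε
  obtain ⟨N, hN⟩ := exists_pow_lt_of_lt_one hε (by norm_num : (1/2 : ℝ) < 1)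
  set n := N + 1 with hn
  obtain ⟨c, hcu, hcd⟩ :
      ∃ c : unitInterval, exF c = Set.univ ∧ (1/4 : ℝ) ≤ dist (x n) c := by
    rcases Stmt16Aux.quarter_sep (x n) with h | h
    · exact ⟨Stmt16Aux.half, Stmt16Aux.exF_eq_univ (Or.inl rfl), h⟩
    · exact ⟨1, Stmt16Aux.exF_eq_univ (Or.inr rfl), h⟩
  set y := Stmt16Aux.seqMod x N c with hy
  refine ⟨y, Stmt16Aux.seqMod_mem hx N hcu, ?_, n, by omega, ?_⟩
  · exact lt_of_le_of_lt (Stmt16Aux.rho_seqMod_le x N c) hN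
  · have hdist : dist ((shift^[n] x) 0) ((shift^[n] y) 0) ≤ rho (shift^[n] x) (shift^[n] y) :=
      Stmt16Aux.dist_le_rho _ _
    have h1 : (shift^[n] x) 0 = x n := by rw [Stmt16Aux.shift_iterate]; norm_num
    have h2 : (shift^[n] y) 0 = c := by
      rw [Stmt16Aux.shift_iterate, hy]
      have : ¬ (0 + n ≤ N) := by omega
      simp [Stmt16Aux.seqMod, this, show ¬ n ≤ N by omega]
    rw [h1, h2] at hdist
    linarith
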